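/- (Main Theorem) Let f be a monic real polynomial of degree n ≥ 1 satisfying Assumption 1, with even/odd splitting f = p − q. Let a, b, x₀ be real numbers with 0 < x₀, a ≤ x₀ ≤ b, such that a is either 0 or a real root of f, b is a real root of f, and f has no real root in the open interval (a, b). Then both updated points x₁ := x₀ · p(x₀)/q(x₀) and x₋₁ := x₀ · q(x₀)/p(x₀) lie in the interval [a, b]. -/

import Mathlib

open Polynomial

private lemma aux_abs_le {x : ℝ} (hx : 0 < x) {z : ℂ} (hz : 0 ≤ z.re) :
    ‖(x : ℂ) - z‖ ≤ ‖(x : ℂ) + z‖ := by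
  rw [Complex.norm_def, Complex.norm_def]
  apply Real.sqrt_le_sqrt
  simp only [Complex.normSq_apply, Complex.sub_re, Complex.add_re, Complex.sub_im,
    Complex.add_im, Complex.ofReal_re, Complex.ofReal_im]
  nlinarith [mul_nonneg hx.le hz]

private lemma aux_abs_lt {x : ℝ} (hx : 0 < x) {z : ℂ} (hz : 0 < z.re) :
    ‖(x : ℂ) - z‖ < ‖(x : ℂ) + z‖ := by
  rw [Complex.norm_def, Complex.norm_def]
  apply Real.sqrt_lt_sqrt (Complex.normSq_nonneg _)
  simp only [Complex.normSq_apply, Complex.sub_re, Complex.add_re, Complex.sub_im,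
    Complex.add_im, Complex.ofReal_re, Complex.ofReal_im]
  nlinarith [mul_pos hx hz]

private lemma aux_prod_nonneg (s : Multiset ℂ) (h : ℂ → ℂ) :
    0 ≤ (s.map fun z => ‖h z‖).prod := by
  apply Multiset.prod_nonneg
  intro y hy
  obtain ⟨z, _, rfl⟩ := Multiset.mem_map.mp hy
  exact norm_nonneg _

private lemma aux_prod_pos {x : ℝ} (hx : 0 < x) (s : Multiset ℂ) (h : ∀ z ∈ s, 0 ≤ z.re) :
    0 < (s.map fun z => ‖(x : ℂ) + z‖).prod := by
  induction s using Multiset.induction_on with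
  | empty => simp
  | cons z s ih =>
    rw [Multiset.map_cons, Multiset.prod_cons]
    have hz := h z (Multiset.mem_cons_self z s)
    have hne : (x : ℂ) + z ≠ 0 := by
      intro h0
      have h1 : ((x : ℂ) + z).re = 0 := by rw [h0]; simp
      simp only [Complex.add_re, Complex.ofReal_re] at h1
      linarith
    exact mul_pos (norm_pos_iff.mpr hne) (ih fun w hw => h w (Multiset.mem_cons_of_mem hw))

private lemma aux_prod_le {x : ℝ} (hx : 0 < x) (s : Multiset ℂ) (h : ∀ z ∈ s, 0 ≤ z.re) :
    (s.map fun z => ‖(x : ℂ) - z‖).prod ≤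
      (s.map fun z => ‖(x : ℂ) + z‖).prod := by
  induction s using Multiset.induction_on with
  | empty => simp
  | cons z s ih =>
    rw [Multiset.map_cons, Multiset.prod_cons, Multiset.map_cons, Multiset.prod_cons]
    exact mul_le_mul (aux_abs_le hx (h z (Multiset.mem_cons_self z s)))
      (ih fun w hw => h w (Multiset.mem_cons_of_mem hw))
      (aux_prod_nonneg s _) (norm_nonneg _)

/-- **Main Theorem.** Let `f` be a monic real polynomial of degree `n ≥ 1`
satisfying Assumption 1, with even/odd splitting `f = p - q`. Let `a, b, x₀` be reals with
`0 < x₀`, `a ≤ x₀ ≤ b`, where `a` is either `0` or a real root of `f`, `b` is a real root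
of `f`, and `f` has no real root in the open interval `(a, b)`. Then both updated points
`x₀ * p x₀ / q x₀` and `x₀ * q x₀ / p x₀` lie in `[a, b]`. -/
theorem stmt8 (f : Polynomial ℝ) (n : ℕ) (hn : 1 ≤ n)
    (hmonic : f.Monic) (hdeg : f.natDegree = n)
    (has1 : ∀ z : ℂ, (Polynomial.aeval z) f = 0 → 0 ≤ z.re)
    (has2 : ∃ z : ℂ, (Polynomial.aeval z) f = 0 ∧ 0 < z.re)
    (p q : ℝ → ℝ)
    (hp : ∀ x : ℝ, p x =
      ∑ j ∈ Finset.range (n + 1), if (n + j) % 2 = 0 then f.coeff j * x ^ j else 0)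
    (hq : ∀ x : ℝ, q x =
      ∑ j ∈ Finset.range (n + 1), if (n + j) % 2 = 1 then -(f.coeff j) * x ^ j else 0)
    (a b x₀ : ℝ) (hx₀ : 0 < x₀) (hax₀ : a ≤ x₀) (hx₀b : x₀ ≤ b)
    (ha : a = 0 ∨ f.IsRoot a) (hb : f.IsRoot b)
    (hnoroot : ∀ x : ℝ, a < x → x < b → ¬ f.IsRoot x) :
    x₀ * p x₀ / q x₀ ∈ Set.Icc a b ∧ x₀ * q x₀ / p x₀ ∈ Set.Icc a b := by
  have hfdeg : f.natDegree < n + 1 := by omega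
  set F : Polynomial ℂ := f.map (algebraMap ℝ ℂ) with hFdef
  have hFm : F.Monic := hmonic.map _
  have hF0 : F ≠ 0 := hFm.ne_zero
  set R : Multiset ℂ := F.roots with hRdef
  have hsplit : F = (R.map fun z => X - C z).prod :=
    Splits.eq_prod_roots_of_monic (IsAlgClosed.splits _) hFm
  have hcard : Multiset.card R = n := by
    rw [hRdef, (splits_iff_card_roots).mp (IsAlgClosed.splits _),
      Polynomial.natDegree_map, hdeg]
  -- evaluation facts
  have hevalR : ∀ x : ℝ, ((f.eval x : ℝ) : ℂ) = F.eval (x : ℂ) := by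
    intro x
    rw [hFdef, Polynomial.eval_map, show ((x : ℝ) : ℂ) = algebraMap ℝ ℂ x from rfl,
      Polynomial.eval₂_at_apply]
    rfl
  have hevalA : ∀ y : ℝ, (Polynomial.aeval ((y : ℝ) : ℂ)) f = ((f.eval y : ℝ) : ℂ) := by
    intro y
    rw [Polynomial.aeval_def, Polynomial.eval₂_eq_eval_map, ← hFdef, ← hevalR]
  have hRre : ∀ z ∈ R, 0 ≤ z.re := by
    intro z hz
    apply has1
    rw [Polynomial.aeval_def, Polynomial.eval₂_eq_eval_map, ← hFdef]
    exact (Polynomial.mem_roots'.mp hz).2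
  have hprodeval : ∀ w : ℂ, F.eval w = (R.map fun z => w - z).prod := by
    intro w
    conv_lhs => rw [hsplit]
    rw [Polynomial.eval_multiset_prod, Multiset.map_map]
    simp [Function.comp_def]
  have habsf : ∀ x : ℝ, |f.eval x| = (R.map fun z => ‖(x : ℂ) - z‖).prod := by
    intro x
    have h1 : |f.eval x| = ‖F.eval (x : ℂ)‖ := by
      rw [← hevalR, Complex.norm_real, Real.norm_eq_abs]
    rw [h1, hprodeval]
    exact (map_multiset_prod (normHom : ℂ →*₀ ℝ) _).trans (by rw [Multiset.map_map]; rfl)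
  -- the reflected polynomial G with G.eval x = (-1)^n * f.eval (-x)
  set G : Polynomial ℝ := C ((-1 : ℝ) ^ n) * f.comp (-X) with hGdef
  have hGeval : ∀ y : ℝ, G.eval y = (-1 : ℝ) ^ n * f.eval (-y) := by
    intro y
    simp [hGdef, Polynomial.eval_comp]
  have hgC : ∀ x : ℝ, ((G.eval x : ℝ) : ℂ) = (R.map fun z => (x : ℂ) + z).prod := by
    intro x
    have h1 : ((G.eval x : ℝ) : ℂ) = (-1 : ℂ) ^ n * F.eval (((-x : ℝ)) : ℂ) := by
      rw [hGeval, ← hevalR]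
      push_cast
      ring
    rw [h1, hprodeval]
    have h3 : (((-x : ℝ)) : ℂ) = -(x : ℂ) := by push_cast; ring
    rw [h3]
    have h2 : (R.map fun z => -(x : ℂ) - z) = (R.map fun z => (x : ℂ) + z).map Neg.neg := by
      rw [Multiset.map_map]
      apply Multiset.map_congr rfl
      intro z _
      simp [Function.comp]
      ring
    rw [h2, Multiset.prod_map_neg, Multiset.card_map, hcard, ← mul_assoc, ← mul_pow]
    norm_num
  have habsg : ∀ x : ℝ, |G.eval x| = (R.map fun z => ‖(x : ℂ) + z‖).prod := by
    intro x
    have h1 : |G.eval x| = ‖((G.eval x : ℝ) : ℂ)‖ := by rw [Complex.norm_real, Real.norm_eq_abs]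
    rw [h1, hgC]
    exact (map_multiset_prod (normHom : ℂ →*₀ ℝ) _).trans (by rw [Multiset.map_map]; rfl)
  -- positivity of G on (0, ∞) via IVT
  have hclc : ((-1 : ℝ) ^ n) ≠ 0 := by
    apply pow_ne_zero; norm_num
  have hGnat : G.natDegree = n := by
    rw [hGdef, Polynomial.natDegree_C_mul hclc, Polynomial.natDegree_comp]
    simp [hdeg]
  have hGdeg : 0 < G.degree := by
    apply Polynomial.natDegree_pos_iff_degree_pos.mp
    rw [hGnat]; omega
  have hGlc : G.leadingCoeff = 1 := by
    have h1 : (f.comp (-X)).leadingCoeff = (-1 : ℝ) ^ n := by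
      rw [Polynomial.leadingCoeff_comp (by simp : ((-X : Polynomial ℝ)).natDegree ≠ 0),
        hmonic.leadingCoeff, hdeg]
      simp
    rw [hGdef, Polynomial.leadingCoeff_mul, Polynomial.leadingCoeff_C, h1, ← mul_pow]
    norm_num
  have hgpos : ∀ x : ℝ, 0 < x → 0 < G.eval x := by
    intro x hx
    have h1 : 0 < |G.eval x| := by
      rw [habsg]; exact aux_prod_pos hx R hRre
    by_contra hle
    push_neg at hle
    have hglt : G.eval x < 0 := lt_of_le_of_ne hle (abs_pos.mp h1)
    have htt := G.tendsto_atTop_of_leadingCoeff_nonneg hGdeg (by rw [hGlc]; norm_num)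
    have hev := htt.eventually_gt_atTop 0
    rw [Filter.eventually_atTop] at hev
    obtain ⟨T0, hT0⟩ := hev
    have hxT : x < max T0 (x + 1) := lt_of_lt_of_le (by linarith) (le_max_right _ _)
    have hGT : 0 < G.eval (max T0 (x + 1)) := hT0 _ (le_max_left _ _)
    have hmem : (0 : ℝ) ∈ Set.Ioo (G.eval x) (G.eval (max T0 (x + 1))) := ⟨hglt, hGT⟩
    obtain ⟨c, hcmem, hceq⟩ :=
      intermediate_value_Ioo (le_of_lt hxT) G.continuous.continuousOn hmem
    have hceq' : G.eval c = 0 := hceq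
    have hfc : f.eval (-c) = 0 := by
      have h2 := hGeval c
      rw [hceq'] at h2
      rcases mul_eq_zero.mp h2.symm with h3 | h3
      · exact absurd h3 hclc
      · exact h3
    have h4 : 0 ≤ -c := by
      have := has1 (((-c : ℝ)) : ℂ) (by rw [hevalA, hfc]; simp)
      simpa using this
    have : x < c := hcmem.1
    linarith
  have hgprod : ∀ x : ℝ, 0 < x →
      G.eval x = (R.map fun z => ‖(x : ℂ) + z‖).prod := by
    intro x hx
    rw [← habsg, abs_of_pos (hgpos x hx)]
  -- key extraction inequality
  have key : ∀ r : ℝ, 0 ≤ r → ((r : ℂ) ∈ R) → ∀ x : ℝ, 0 < x →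
      (x + r) * |f.eval x| ≤ |x - r| * G.eval x := by
    intro r hr hrR x hx
    obtain ⟨R', hcons⟩ : ∃ R', R = (r : ℂ) ::ₘ R' := ⟨_, (Multiset.cons_erase hrR).symm⟩
    have hR're : ∀ z ∈ R', 0 ≤ z.re :=
      fun z hz => hRre z (by rw [hcons]; exact Multiset.mem_cons_of_mem hz)
    have h1 : |f.eval x| =
        |x - r| * ((R').map fun z => ‖(x : ℂ) - z‖).prod := by
      rw [habsf x, hcons, Multiset.map_cons, Multiset.prod_cons, ← Complex.ofReal_sub,
        Complex.norm_real, Real.norm_eq_abs]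
    have h2 : G.eval x =
        (x + r) * ((R').map fun z => ‖(x : ℂ) + z‖).prod := by
      rw [hgprod x hx, hcons, Multiset.map_cons, Multiset.prod_cons, ← Complex.ofReal_add,
        Complex.norm_real, Real.norm_eq_abs, abs_of_pos (by linarith : (0 : ℝ) < x + r)]
    rw [h1, h2]
    have hle := aux_prod_le hx (R') hR're
    have hnn : 0 ≤ (x + r) * |x - r| := mul_nonneg (by linarith) (abs_nonneg _)
    calc (x + r) * (|x - r| * ((R').map fun z => ‖(x : ℂ) - z‖).prod)
        = ((x + r) * |x - r|) *
            ((R').map fun z => ‖(x : ℂ) - z‖).prod := by ring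
      _ ≤ ((x + r) * |x - r|) *
            ((R').map fun z => ‖(x : ℂ) + z‖).prod :=
          mul_le_mul_of_nonneg_left hle hnn
      _ = |x - r| * ((x + r) *
            ((R').map fun z => ‖(x : ℂ) + z‖).prod) := by ring
  -- strict inequality |f x| < G x for x > 0
  obtain ⟨w, hw0, hwre⟩ := has2
  have hwR : w ∈ R := by
    apply Polynomial.mem_roots'.mpr
    refine ⟨hF0, ?_⟩
    show F.eval w = 0
    rw [← Polynomial.eval₂_eq_eval_map, ← Polynomial.aeval_def]
    exact hw0
  have hstrict : ∀ x : ℝ, 0 < x → |f.eval x| < G.eval x := by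
    intro x hx
    obtain ⟨W', hcons⟩ : ∃ W', R = w ::ₘ W' := ⟨_, (Multiset.cons_erase hwR).symm⟩
    have hR're : ∀ z ∈ W', 0 ≤ z.re :=
      fun z hz => hRre z (by rw [hcons]; exact Multiset.mem_cons_of_mem hz)
    have hPpos := aux_prod_pos hx (W') hR're
    have hle := aux_prod_le hx (W') hR're
    rw [habsf x, hgprod x hx, hcons, Multiset.map_cons, Multiset.prod_cons,
      Multiset.map_cons, Multiset.prod_cons]
    calc ‖(x : ℂ) - w‖ * ((W').map fun z => ‖(x : ℂ) - z‖).prod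
        ≤ ‖(x : ℂ) - w‖ *
            ((W').map fun z => ‖(x : ℂ) + z‖).prod :=
          mul_le_mul_of_nonneg_left hle (norm_nonneg _)
      _ < ‖(x : ℂ) + w‖ *
            ((W').map fun z => ‖(x : ℂ) + z‖).prod :=
          mul_lt_mul_of_pos_right (aux_abs_lt hx hwre) hPpos
  -- pointwise identities for p and q
  have hsub : ∀ x : ℝ, p x - q x = f.eval x := by
    intro x
    rw [hp, hq, Polynomial.eval_eq_sum_range' hfdeg, ← Finset.sum_sub_distrib]
    apply Finset.sum_congr rfl
    intro j _
    rcases Nat.mod_two_eq_zero_or_one (n + j) with h | h <;> simp [h]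
  have hadd : ∀ x : ℝ, p x + q x = G.eval x := by
    intro x
    rw [hp, hq, ← Finset.sum_add_distrib, hGeval]
    have h0 : (-1 : ℝ) ^ n * f.eval (-x) =
        ∑ j ∈ Finset.range (n + 1), (-1 : ℝ) ^ (n + j) * (f.coeff j * x ^ j) := by
      rw [Polynomial.eval_eq_sum_range' hfdeg (-x), Finset.mul_sum]
      apply Finset.sum_congr rfl
      intro j _
      rw [neg_pow, pow_add]
      ring
    rw [h0]
    apply Finset.sum_congr rfl
    intro j _
    rcases Nat.mod_two_eq_zero_or_one (n + j) with h | h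
    · have he : Even (n + j) := Nat.even_iff.mpr h
      simp [h, he.neg_one_pow]
    · have ho : Odd (n + j) := Nat.odd_iff.mpr h
      simp [h, ho.neg_one_pow]
  -- nonnegativity of a
  have ha0 : 0 ≤ a := by
    rcases ha with rfl | har
    · exact le_refl 0
    · have := has1 ((a : ℝ) : ℂ) (by rw [hevalA]; exact_mod_cast har)
      simpa using this
  have hb0 : 0 ≤ b := by linarith
  -- membership of the roots a and b
  have hbR : ((b : ℝ) : ℂ) ∈ R := by
    apply Polynomial.mem_roots'.mpr
    refine ⟨hF0, ?_⟩
    show F.eval ((b : ℝ) : ℂ) = 0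
    rw [← hevalR]
    exact_mod_cast hb
  -- the two master inequalities at x₀
  have habs0 : |f.eval x₀| < G.eval x₀ := hstrict x₀ hx₀
  have hPpos : 0 < p x₀ := by
    have h1 := (abs_lt.mp habs0).1
    have h2 := hsub x₀
    have h3 := hadd x₀
    linarith
  have hQpos : 0 < q x₀ := by
    have h1 := (abs_lt.mp habs0).2
    have h2 := hsub x₀
    have h3 := hadd x₀
    linarith
  have keyb : (x₀ + b) * |f.eval x₀| ≤ (b - x₀) * G.eval x₀ := by
    have h := key b hb0 hbR x₀ hx₀
    rwa [abs_of_nonpos (by linarith : x₀ - b ≤ 0), neg_sub] at h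
  have keya : (x₀ + a) * |f.eval x₀| ≤ (x₀ - a) * G.eval x₀ := by
    rcases ha with rfl | har
    · simpa using mul_le_mul_of_nonneg_left (le_of_lt habs0) hx₀.le
    · have haR : ((a : ℝ) : ℂ) ∈ R := by
        apply Polynomial.mem_roots'.mpr
        refine ⟨hF0, ?_⟩
        show F.eval ((a : ℝ) : ℂ) = 0
        rw [← hevalR]
        exact_mod_cast har
      have h := key a ha0 haR x₀ hx₀
      rwa [abs_of_nonneg (by linarith : (0 : ℝ) ≤ x₀ - a)] at h
  -- express in terms of p, q
  have hfe : f.eval x₀ = p x₀ - q x₀ := (hsub x₀).symm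
  have hge : G.eval x₀ = p x₀ + q x₀ := (hadd x₀).symm
  rw [hfe, hge] at keya keyb
  have e1 : (x₀ + a) * (p x₀ - q x₀) ≤ (x₀ + a) * |p x₀ - q x₀| :=
    mul_le_mul_of_nonneg_left (le_abs_self _) (by linarith)
  have e2 : (x₀ + a) * (-(p x₀ - q x₀)) ≤ (x₀ + a) * |p x₀ - q x₀| :=
    mul_le_mul_of_nonneg_left (neg_le_abs _) (by linarith)
  have e3 : (x₀ + b) * (p x₀ - q x₀) ≤ (x₀ + b) * |p x₀ - q x₀| :=
    mul_le_mul_of_nonneg_left (le_abs_self _) (by linarith)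
  have e4 : (x₀ + b) * (-(p x₀ - q x₀)) ≤ (x₀ + b) * |p x₀ - q x₀| :=
    mul_le_mul_of_nonneg_left (neg_le_abs _) (by linarith)
  rw [Set.mem_Icc, Set.mem_Icc]
  refine ⟨⟨?_, ?_⟩, ?_, ?_⟩
  · rw [le_div_iff₀ hQpos]
    nlinarith [keya, e2]
  · rw [div_le_iff₀ hQpos]
    nlinarith [keyb, e3]
  · rw [le_div_iff₀ hPpos]
    nlinarith [keya, e1]
  · rw [div_le_iff₀ hPpos]
    nlinarith [keyb, e4]
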